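/- Let d ≥ 1, n = 2^d, B : [n] → {−1,+1}^d a bijection, τ ∈ (0,1), X a measurable space, and D a probability measure on X × [n]. Then for every measurable f : X → R^d, er^ℓ_D[pred^BEP_τ ∘ f] − er^{ℓ,*}_D ≤ ( er^{ψ^BEP}_D[f] − er^{ψ^BEP,*}_D ) / ( 2 min(τ, 1−τ) ), where ℓ = ℓ^{1/2} is the abstain(1/2) loss. -/

import Mathlib

open scoped BigOperators
open MeasureTheory

/-- The abstain(1/2) loss is `abstainLoss n (1/2)`. -/
noncomputable def abstainLoss (n : ℕ) (α : ℝ) (y : Fin n) (t : Fin (n + 1)) : ℝ :=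
  if t = Fin.last n then α else if (t : ℕ) = (y : ℕ) then 0 else 1

/-- The BEP surrogate. `B : Fin (2^d) ≃ (Fin d → Bool)` encodes a bijection
`[n] → {−1,+1}^d`, where `true ↦ +1` and `false ↦ −1`:
`ψ^BEP(y,u) = ( max_{j∈[d]} B_j(y) u_j + 1 )_+`. -/
noncomputable def psiBEP (d : ℕ) (B : Fin (2 ^ d) ≃ (Fin d → Bool)) (y : Fin (2 ^ d))
    (u : Fin d → ℝ) : ℝ :=
  max ((⨆ j, (if B y j then (1 : ℝ) else -1) * u j) + 1) 0

/-- The coordinatewise sign vector of `−u`, where `sign(a) = +1` (`true`) if `a ≥ 0`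
and `−1` (`false`) if `a < 0`; so `sign(−u)_j = +1` iff `u j ≤ 0`. -/
noncomputable def signNeg (d : ℕ) (u : Fin d → ℝ) : Fin d → Bool :=
  fun j => decide (u j ≤ 0)

/-- `pred^BEP_τ(u)`: `n+1` if `min_j |u_j| ≤ τ`, and `B⁻¹(sign(−u))` otherwise. -/
noncomputable def predBEP (d : ℕ) (B : Fin (2 ^ d) ≃ (Fin d → Bool)) (τ : ℝ)
    (u : Fin d → ℝ) : Fin (2 ^ d + 1) :=
  if (⨅ j, |u j|) ≤ τ then Fin.last (2 ^ d)
  else Fin.castSucc (B.symm (signNeg d u))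

namespace BEPaux

noncomputable def eps {d : ℕ} (B : Fin (2 ^ d) ≃ (Fin d → Bool)) (y : Fin (2 ^ d))
    (j : Fin d) : ℝ := if B y j then 1 else -1

variable {d : ℕ} {B : Fin (2 ^ d) ≃ (Fin d → Bool)} {τ : ℝ}

lemma psi_def (y : Fin (2 ^ d)) (u : Fin d → ℝ) :
    psiBEP d B y u = max ((⨆ j, eps B y j * u j) + 1) 0 := rfl

lemma psi_nonneg (y : Fin (2 ^ d)) (u : Fin d → ℝ) : 0 ≤ psiBEP d B y u :=
  le_max_right _ _

lemma eps_sq (y : Fin (2 ^ d)) (j : Fin d) : eps B y j * eps B y j = 1 := by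
  unfold eps; split <;> norm_num

lemma eps_prod_ge (y y' : Fin (2 ^ d)) (j : Fin d) : -1 ≤ eps B y j * eps B y' j := by
  unfold eps; split <;> split <;> norm_num

lemma eps_prod_eq (y y' : Fin (2 ^ d)) (j : Fin d) :
    eps B y j * eps B y' j = if B y j = B y' j then 1 else -1 := by
  unfold eps
  by_cases h1 : B y j <;> by_cases h2 : B y' j <;> simp [h1, h2]

lemma eps_mul (y : Fin (2 ^ d)) (j : Fin d) (u : Fin d → ℝ) :
    eps B y j * u j = if B y j = signNeg d u j then -|u j| else |u j| := by
  unfold eps signNeg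
  by_cases hb : B y j <;> by_cases hu : u j ≤ 0 <;>
    simp [hb, hu, abs_of_nonpos, abs_of_pos, lt_of_not_ge, abs_of_nonneg, le_of_not_ge]

lemma neg_abs_le_eps (y : Fin (2 ^ d)) (j : Fin d) (u : Fin d → ℝ) :
    -|u j| ≤ eps B y j * u j := by
  rw [eps_mul]
  split
  · exact le_refl _
  · exact (neg_abs_le (u j)).trans (le_abs_self _)

lemma coord_le_sup [Nonempty (Fin d)] (y : Fin (2 ^ d)) (u : Fin d → ℝ) (j : Fin d) :
    eps B y j * u j ≤ ⨆ i, eps B y i * u i :=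
  le_ciSup (Set.Finite.bddAbove (Set.finite_range fun i => eps B y i * u i)) j

lemma psi_le_add [Nonempty (Fin d)] (y : Fin (2 ^ d)) {u v : Fin d → ℝ} {s : ℝ} (hs : 0 ≤ s)
    (h : ∀ j, eps B y j * v j ≤ (⨆ j, eps B y j * u j) + s) :
    psiBEP d B y v ≤ psiBEP d B y u + s := by
  rw [psi_def, psi_def]
  have h1 : (⨆ j, eps B y j * v j) ≤ (⨆ j, eps B y j * u j) + s := ciSup_le h
  have h2 := le_max_left ((⨆ j, eps B y j * u j) + 1) (0 : ℝ)
  have h3 := le_max_right ((⨆ j, eps B y j * u j) + 1) (0 : ℝ)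
  exact max_le (by linarith) (by linarith)

lemma psi_add_le [Nonempty (Fin d)] (y : Fin (2 ^ d)) {u v : Fin d → ℝ} {s : ℝ} (hs : 0 ≤ s)
    (hM : s ≤ (⨆ j, eps B y j * u j) + 1)
    (h : ∀ j, eps B y j * v j ≤ (⨆ j, eps B y j * u j) - s) :
    psiBEP d B y v + s ≤ psiBEP d B y u := by
  rw [psi_def, psi_def]
  have h1 : (⨆ j, eps B y j * v j) ≤ (⨆ j, eps B y j * u j) - s := ciSup_le h
  have h2 := le_max_left ((⨆ j, eps B y j * u j) + 1) (0 : ℝ)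
  have h4 : max ((⨆ j, eps B y j * v j) + 1) 0 ≤ (⨆ j, eps B y j * u j) + 1 - s :=
    max_le (by linarith) (by linarith)
  linarith

lemma loss_last (n : ℕ) (α : ℝ) (y : Fin n) : abstainLoss n α y (Fin.last n) = α := if_pos rfl

lemma loss_castSucc (n : ℕ) (α : ℝ) (y y₀ : Fin n) :
    abstainLoss n α y (Fin.castSucc y₀) = if y₀ = y then 0 else 1 := by
  unfold abstainLoss
  rw [if_neg (Fin.castSucc_lt_last y₀).ne]
  simp [Fin.val_eq_val]

lemma loss_nonneg (n : ℕ) (y : Fin n) (t : Fin (n + 1)) : 0 ≤ abstainLoss n (1/2) y t := by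
  unfold abstainLoss
  split
  · norm_num
  · split <;> norm_num


noncomputable def GfunBEP (d : ℕ) (B : Fin (2 ^ d) ≃ (Fin d → Bool)) (τ : ℝ)
    (u : Fin d → ℝ) (t : Fin (2 ^ d + 1)) : Fin d → ℝ :=
  if ht : t = Fin.last (2 ^ d) then
    if (⨅ j, |u j|) ≤ τ then u
    else fun j => u j - min τ (1 - τ) * (if 0 ≤ u j then 1 else -1)
  else
    if (⨅ j, |u j|) ≤ τ then
      fun j => u j - min τ (1 - τ) * eps B (t.castPred ht) j
    else fun j =>
      if B (t.castPred ht) j = signNeg d u j then u j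
      else u j - 2 * min τ (1 - τ) * eps B (t.castPred ht) j

lemma key (hd : 1 ≤ d) (hτ0 : 0 < τ) (hτ1 : τ < 1) (u : Fin d → ℝ) (t : Fin (2 ^ d + 1))
    (y : Fin (2 ^ d)) :
    2 * min τ (1 - τ) * abstainLoss (2 ^ d) (1/2) y (predBEP d B τ u)
      + psiBEP d B y (GfunBEP d B τ u t)
    ≤ psiBEP d B y u + 2 * min τ (1 - τ) * abstainLoss (2 ^ d) (1/2) y t := by
  haveI : Nonempty (Fin d) := ⟨⟨0, hd⟩⟩
  set m := min τ (1 - τ) with hmdef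
  have hm0 : 0 < m := lt_min hτ0 (by linarith)
  have hmτ : m ≤ τ := min_le_left _ _
  have hm1 : m ≤ 1 - τ := min_le_right _ _
  have hmhalf : 2 * m ≤ 1 := by
    rcases le_total τ (1 - τ) with h | h
    · rw [hmdef, min_eq_left h]; linarith
    · rw [hmdef, min_eq_right h]; linarith
  set M := ⨆ j, eps B y j * u j with hM
  have hcoord : ∀ j, eps B y j * u j ≤ M := fun j => coord_le_sup y u j
  by_cases hα : (⨅ j, |u j|) ≤ τ
  · -- abstain case
    have hpred : predBEP d B τ u = Fin.last _ := if_pos hα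
    have hMτ : -τ ≤ M := by
      have h1 : -M ≤ ⨅ j, |u j| := le_ciInf fun j => by
        have h2 := neg_abs_le_eps (B := B) y j u
        have h3 := hcoord j
        linarith
      linarith
    rw [hpred, loss_last]
    rcases eq_or_ne t (Fin.last (2 ^ d)) with ht | ht
    · subst ht
      rw [loss_last]
      have hG : GfunBEP d B τ u (Fin.last (2 ^ d)) = u := by
        rw [GfunBEP, dif_pos rfl, if_pos hα]
      rw [hG]
      linarith [psi_nonneg (B := B) y u]
    · obtain ⟨y₀, rfl⟩ : ∃ y₀, t = Fin.castSucc y₀ :=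
        ⟨t.castPred ht, (Fin.castSucc_castPred t ht).symm⟩
      rw [loss_castSucc]
      have hG : GfunBEP d B τ u (Fin.castSucc y₀) = fun j => u j - m * eps B y₀ j := by
        rw [GfunBEP, dif_neg ht, if_pos hα, Fin.castPred_castSucc]
      rw [hG]
      by_cases hy : y₀ = y
      · subst hy
        rw [if_pos rfl]
        have hkey : psiBEP d B y₀ (fun j => u j - m * eps B y₀ j) + m ≤ psiBEP d B y₀ u := by
          apply psi_add_le y₀ (le_of_lt hm0) (by rw [← hM]; linarith)
          intro j
          have h1 : eps B y₀ j * (u j - m * eps B y₀ j)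
              = eps B y₀ j * u j - m * (eps B y₀ j * eps B y₀ j) := by ring
          rw [h1, eps_sq]
          rw [← hM]
          linarith [hcoord j]
        linarith
      · rw [if_neg hy]
        have hkey : psiBEP d B y (fun j => u j - m * eps B y₀ j) ≤ psiBEP d B y u + m := by
          apply psi_le_add y (le_of_lt hm0)
          intro j
          have h1 : eps B y j * (u j - m * eps B y₀ j)
              = eps B y j * u j - m * (eps B y j * eps B y₀ j) := by ring
          rw [h1, ← hM]
          have h2 := eps_prod_ge (B := B) y y₀ j
          nlinarith [hcoord j]
        linarith
  · -- confident case
    have hβ : ∀ j, τ < |u j| := fun j =>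
      lt_of_lt_of_le (lt_of_not_ge hα)
        (ciInf_le (Set.Finite.bddBelow (Set.finite_range fun i => |u i|)) j)
    have hpred : predBEP d B τ u = Fin.castSucc (B.symm (signNeg d u)) := if_neg hα
    set ys := B.symm (signNeg d u) with hys
    have hBys : ∀ j, B ys j = signNeg d u j := fun j =>
      congrFun (B.apply_symm_apply (signNeg d u)) j
    rw [hpred, loss_castSucc]
    have hMgt : y ≠ ys → τ < M := by
      intro hy
      obtain ⟨j, hj⟩ : ∃ j, B y j ≠ signNeg d u j := by
        by_contra hc
        push_neg at hc
        exact hy (by rw [hys]; apply_fun B; · rw [B.apply_symm_apply]; funext j; exact hc j)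
      have h1 : eps B y j * u j = |u j| := by rw [eps_mul, if_neg hj]
      have := hcoord j
      have := hβ j
      linarith
    rcases eq_or_ne t (Fin.last (2 ^ d)) with ht | ht
    · subst ht
      rw [loss_last]
      have hG : GfunBEP d B τ u (Fin.last (2 ^ d))
          = fun j => u j - m * (if 0 ≤ u j then 1 else -1) := by
        rw [GfunBEP, dif_pos rfl, if_neg hα]
      rw [hG]
      have hsgn : ∀ (y' : Fin (2 ^ d)) j, eps B y' j * (if 0 ≤ u j then (1:ℝ) else -1)
          = if B y' j = signNeg d u j then -1 else 1 := by
        intro y' j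
        have hne : u j ≠ 0 := by
          intro h
          have := hβ j
          rw [h] at this
          simp at this
          linarith
        unfold eps signNeg
        by_cases hb : B y' j <;> by_cases hu : u j ≤ 0
        · have : ¬ (0 ≤ u j) := fun h => hne (le_antisymm hu h)
          simp [hb, hu, this]
        · have : 0 ≤ u j := le_of_not_ge hu
          simp [hb, hu, this]
        · have : ¬ (0 ≤ u j) := fun h => hne (le_antisymm hu h)
          simp [hb, hu, this]
        · have : 0 ≤ u j := le_of_not_ge hu
          simp [hb, hu, this]
      by_cases hy : ys = y
      · rw [if_pos hy]
        have hkey : psiBEP d B y (fun j => u j - m * (if 0 ≤ u j then 1 else -1))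
            ≤ psiBEP d B y u + m := by
          apply psi_le_add y (le_of_lt hm0)
          intro j
          have h1 : eps B y j * (u j - m * (if 0 ≤ u j then 1 else -1))
              = eps B y j * u j - m * (eps B y j * (if 0 ≤ u j then 1 else -1)) := by ring
          rw [h1, hsgn y j, ← hM]
          have h2 := hcoord j
          split <;> linarith
        linarith
      · rw [if_neg hy]
        have hMτ : τ < M := hMgt (Ne.symm hy)
        have hkey : psiBEP d B y (fun j => u j - m * (if 0 ≤ u j then 1 else -1)) + m
            ≤ psiBEP d B y u := by
          apply psi_add_le y (le_of_lt hm0) (by rw [← hM]; linarith)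
          intro j
          have h1 : eps B y j * (u j - m * (if 0 ≤ u j then 1 else -1))
              = eps B y j * u j - m * (eps B y j * (if 0 ≤ u j then 1 else -1)) := by ring
          rw [h1, hsgn y j, ← hM]
          by_cases hj : B y j = signNeg d u j
          · rw [if_pos hj]
            have h3 : eps B y j * u j = -|u j| := by rw [eps_mul, if_pos hj]
            have := hβ j
            linarith
          · rw [if_neg hj]
            have h2 := hcoord j
            linarith
        linarith
    · obtain ⟨y₀, rfl⟩ : ∃ y₀, t = Fin.castSucc y₀ :=
        ⟨t.castPred ht, (Fin.castSucc_castPred t ht).symm⟩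
      rw [loss_castSucc]
      have hG : GfunBEP d B τ u (Fin.castSucc y₀)
          = fun j => if B y₀ j = signNeg d u j then u j else u j - 2 * m * eps B y₀ j := by
        rw [GfunBEP, dif_neg ht, if_neg hα, Fin.castPred_castSucc]
      rw [hG]
      by_cases hyys : ys = y
      · rw [if_pos hyys]
        by_cases hy0 : y₀ = y
        · rw [if_pos hy0]
          have hGu : (fun j => if B y₀ j = signNeg d u j then u j
              else u j - 2 * m * eps B y₀ j) = u := by
            funext j
            rw [if_pos (by rw [hy0, ← hyys, hBys])]
          rw [hGu]
          linarith
        · rw [if_neg hy0]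
          have hkey : psiBEP d B y (fun j => if B y₀ j = signNeg d u j then u j
              else u j - 2 * m * eps B y₀ j) ≤ psiBEP d B y u + 2 * m := by
            apply psi_le_add y (by linarith)
            intro j
            rw [← hM]
            by_cases hj : B y₀ j = signNeg d u j
            · rw [if_pos hj]
              have := hcoord j
              linarith
            · rw [if_neg hj]
              have h1 : eps B y j * (u j - 2 * m * eps B y₀ j)
                  = eps B y j * u j - 2 * m * (eps B y j * eps B y₀ j) := by ring
              rw [h1, eps_prod_eq]
              have hBy : B y j = signNeg d u j := by rw [← hyys, hBys]
              have hByy0 : ¬ (B y j = B y₀ j) := by rw [hBy]; exact fun h => hj h.symm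
              rw [if_neg hByy0]
              have := hcoord j
              linarith
          linarith
      · rw [if_neg hyys]
        have hMτ : τ < M := hMgt (Ne.symm hyys)
        by_cases hy0 : y₀ = y
        · rw [if_pos hy0]
          have hkey : psiBEP d B y (fun j => if B y₀ j = signNeg d u j then u j
              else u j - 2 * m * eps B y₀ j) + 2 * m ≤ psiBEP d B y u := by
            apply psi_add_le y (by linarith) (by rw [← hM]; linarith)
            intro j
            rw [← hM]
            by_cases hj : B y₀ j = signNeg d u j
            · rw [if_pos hj]
              have hBy : B y j = signNeg d u j := by rw [← hy0]; exact hj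
              have h3 : eps B y j * u j = -|u j| := by rw [eps_mul, if_pos hBy]
              have := hβ j
              linarith
            · rw [if_neg hj]
              have h1 : eps B y j * (u j - 2 * m * eps B y₀ j)
                  = eps B y j * u j - 2 * m * (eps B y j * eps B y₀ j) := by ring
              rw [h1, eps_prod_eq, if_pos (by rw [hy0])]
              have := hcoord j
              linarith
          linarith
        · rw [if_neg hy0]
          have hkey : psiBEP d B y (fun j => if B y₀ j = signNeg d u j then u j
              else u j - 2 * m * eps B y₀ j) ≤ psiBEP d B y u + 0 := by
            apply psi_le_add y le_rfl
            intro j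
            rw [← hM]
            by_cases hj : B y₀ j = signNeg d u j
            · rw [if_pos hj]
              have := hcoord j
              linarith
            · rw [if_neg hj]
              have h1 : eps B y j * (u j - 2 * m * eps B y₀ j)
                  = eps B y j * u j - 2 * m * (eps B y j * eps B y₀ j) := by ring
              rw [h1, eps_prod_eq]
              by_cases hbj : B y j = B y₀ j
              · rw [if_pos hbj]
                have := hcoord j
                linarith
              · rw [if_neg hbj]
                have hBy : B y j = signNeg d u j := by
                  cases h1 : B y j <;> cases h2 : B y₀ j <;>
                    cases h3 : signNeg d u j <;>
                    simp_all
                have h3 : eps B y j * u j = -|u j| := by rw [eps_mul, if_pos hBy]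
                have := hβ j
                linarith
          linarith



section Meas

lemma meas_sup [Nonempty (Fin d)] (y : Fin (2 ^ d)) :
    Measurable fun u : Fin d → ℝ => ⨆ j, eps B y j * u j := by
  have h : (fun u : Fin d → ℝ => ⨆ j, eps B y j * u j)
      = fun u => Finset.univ.sup' Finset.univ_nonempty (fun j => eps B y j * u j) :=
    funext fun u => (Finset.sup'_univ_eq_ciSup _).symm
  rw [h]
  exact (Continuous.finset_sup'_apply Finset.univ_nonempty
    (fun j _ => continuous_const.mul (continuous_apply j))).measurable

lemma meas_psi [Nonempty (Fin d)] (y : Fin (2 ^ d)) : Measurable (psiBEP d B y) := by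
  have h : psiBEP d B y = fun u => max ((⨆ j, eps B y j * u j) + 1) 0 := rfl
  rw [h]
  exact ((meas_sup y).add_const 1).max measurable_const

lemma measSet_inf [Nonempty (Fin d)] :
    MeasurableSet {u : Fin d → ℝ | (⨅ j, |u j|) ≤ τ} := by
  have h : Measurable fun u : Fin d → ℝ => ⨅ j, |u j| := by
    have h2 : (fun u : Fin d → ℝ => ⨅ j, |u j|)
        = fun u => Finset.univ.inf' Finset.univ_nonempty (fun j => |u j|) :=
      funext fun u => (Finset.inf'_univ_eq_ciInf _).symm
    rw [h2]
    exact (Continuous.finset_inf'_apply Finset.univ_nonempty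
      (fun j _ => (continuous_apply j).abs)).measurable
  exact measurableSet_le h measurable_const

lemma meas_signNeg : Measurable (signNeg d) := by
  rw [measurable_pi_iff]
  intro j
  have h : (fun u : Fin d → ℝ => signNeg d u j)
      = fun u => if u j ≤ 0 then true else false := by
    funext u
    by_cases h : u j ≤ 0 <;> simp [signNeg, h]
  rw [h]
  exact Measurable.ite (measurableSet_le (measurable_pi_apply j) measurable_const)
    measurable_const measurable_const

lemma meas_pred [Nonempty (Fin d)] : Measurable (predBEP d B τ) := by
  unfold predBEP
  exact Measurable.ite measSet_inf measurable_const
    ((measurable_of_countable fun v : Fin d → Bool => Fin.castSucc (B.symm v)).comp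
      meas_signNeg)

lemma meas_G [Nonempty (Fin d)] :
    Measurable fun p : (Fin d → ℝ) × Fin (2 ^ d + 1) => GfunBEP d B τ p.1 p.2 := by
  apply measurable_from_prod_countable_left
  intro t
  by_cases ht : t = Fin.last (2 ^ d)
  · simp only [GfunBEP, dif_pos ht]
    apply Measurable.ite measSet_inf measurable_id
    rw [measurable_pi_iff]
    intro j
    exact (measurable_pi_apply j).sub
      (measurable_const.mul (Measurable.ite
        (measurableSet_le measurable_const (measurable_pi_apply j))
        measurable_const measurable_const))
  · simp only [GfunBEP, dif_neg ht]
    apply Measurable.ite measSet_inf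
    · rw [measurable_pi_iff]
      intro j
      exact (measurable_pi_apply j).sub (measurable_const (a := min τ (1 - τ) * eps B (t.castPred ht) j))
    · rw [measurable_pi_iff]
      intro j
      have hset : MeasurableSet {u : Fin d → ℝ | B (t.castPred ht) j = signNeg d u j} := by
        rcases Bool.eq_false_or_eq_true (B (t.castPred ht) j) with hb | hb
        · have : {u : Fin d → ℝ | B (t.castPred ht) j = signNeg d u j}
              = {u : Fin d → ℝ | u j ≤ 0} := by
            ext u
            simp [signNeg, hb]
          rw [this]
          exact measurableSet_le (measurable_pi_apply j) measurable_const
        · have : {u : Fin d → ℝ | B (t.castPred ht) j = signNeg d u j}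
              = {u : Fin d → ℝ | u j ≤ 0}ᶜ := by
            ext u
            simp [signNeg, hb, not_le]
          rw [this]
          exact (measurableSet_le (measurable_pi_apply j) measurable_const).compl
      exact Measurable.ite hset (measurable_pi_apply j)
        ((measurable_pi_apply j).sub
          (measurable_const (a := 2 * min τ (1 - τ) * eps B (t.castPred ht) j)))

end Meas


lemma psi_zero [Nonempty (Fin d)] (y : Fin (2 ^ d)) : psiBEP d B y (fun _ => 0) = 1 := by
  rw [psi_def]
  simp [ciSup_const]

variable {X : Type*} [MeasurableSpace X]

lemma meas_lossInt [Nonempty (Fin d)] (H : X → Fin (2 ^ d + 1)) (hH : Measurable H) :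
    Measurable fun z : X × Fin (2 ^ d) =>
      ENNReal.ofReal (abstainLoss (2 ^ d) (1/2) z.2 (H z.1)) :=
  measurable_from_prod_countable_left fun y =>
    (measurable_of_countable fun t => ENNReal.ofReal (abstainLoss (2 ^ d) (1/2) y t)).comp hH

lemma meas_psiInt [Nonempty (Fin d)] (g : X → Fin d → ℝ) (hg : Measurable g) :
    Measurable fun z : X × Fin (2 ^ d) => ENNReal.ofReal (psiBEP d B z.2 (g z.1)) :=
  measurable_from_prod_countable_left fun y =>
    ENNReal.measurable_ofReal.comp ((meas_psi y).comp hg)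

end BEPaux


open BEPaux in
theorem psiBEP_excess_risk_bound (d : ℕ) (hd : 1 ≤ d) (B : Fin (2 ^ d) ≃ (Fin d → Bool))
    (τ : ℝ) (hτ0 : 0 < τ) (hτ1 : τ < 1)
    {X : Type*} [MeasurableSpace X] (D : Measure (X × Fin (2 ^ d)))
    [IsProbabilityMeasure D]
    (f : X → Fin d → ℝ) (hf : Measurable f) :
    (∫⁻ z, ENNReal.ofReal (abstainLoss (2 ^ d) (1/2) z.2 (predBEP d B τ (f z.1))) ∂D) -
      (⨅ h : {h : X → Fin (2 ^ d + 1) // Measurable h},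
        ∫⁻ z, ENNReal.ofReal (abstainLoss (2 ^ d) (1/2) z.2 (h.1 z.1)) ∂D) ≤
    ((∫⁻ z, ENNReal.ofReal (psiBEP d B z.2 (f z.1)) ∂D) -
      (⨅ g : {g : X → Fin d → ℝ // Measurable g},
        ∫⁻ z, ENNReal.ofReal (psiBEP d B z.2 (g.1 z.1)) ∂D)) /
      ENNReal.ofReal (2 * min τ (1 - τ)) := by
  classical
  haveI : Nonempty (Fin d) := ⟨⟨0, hd⟩⟩
  haveI : Nonempty {h : X → Fin (2 ^ d + 1) // Measurable h} :=
    ⟨⟨fun _ => Fin.last _, measurable_const⟩⟩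
  haveI : Nonempty {g : X → Fin d → ℝ // Measurable g} :=
    ⟨⟨fun _ _ => 0, measurable_const⟩⟩
  set m := min τ (1 - τ) with hmdef
  have hm0 : 0 < m := lt_min hτ0 (by linarith)
  set k := ENNReal.ofReal (2 * m) with hk
  have hk0 : k ≠ 0 := by
    rw [hk, Ne, ENNReal.ofReal_eq_zero, not_le]
    linarith
  have hktop : k ≠ ⊤ := ENNReal.ofReal_ne_top
  set A := ∫⁻ z, ENNReal.ofReal (abstainLoss (2 ^ d) (1/2) z.2 (predBEP d B τ (f z.1))) ∂D
    with hA
  set C := ∫⁻ z, ENNReal.ofReal (psiBEP d B z.2 (f z.1)) ∂D with hC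
  set E := ⨅ g : {g : X → Fin d → ℝ // Measurable g},
    ∫⁻ z, ENNReal.ofReal (psiBEP d B z.2 (g.1 z.1)) ∂D with hE
  have hEC : E ≤ C := iInf_le _ (⟨f, hf⟩ : {g : X → Fin d → ℝ // Measurable g})
  have hE1 : E ≤ 1 := by
    refine le_trans (iInf_le _ (⟨fun _ _ => 0, measurable_const⟩ : {g : X → Fin d → ℝ // Measurable g})) ?_
    simp only [psi_zero]
    simp
  have hEtop : E ≠ ⊤ := (lt_of_le_of_lt hE1 ENNReal.one_lt_top).ne
  rw [ENNReal.le_div_iff_mul_le (Or.inl hk0) (Or.inl hktop)]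
  rw [ENNReal.sub_mul (fun _ _ => hktop), ENNReal.iInf_mul_of_ne hk0 hktop]
  rw [tsub_le_iff_right, ENNReal.add_iInf]
  refine le_iInf fun h => ?_
  set g : X → Fin d → ℝ := fun x => GfunBEP d B τ (f x) (h.1 x) with hgdef
  have hgm : Measurable g := meas_G.comp (hf.prodMk h.2)
  have hEg : E ≤ ∫⁻ z, ENNReal.ofReal (psiBEP d B z.2 (g z.1)) ∂D := iInf_le _ (⟨g, hgm⟩ : {g : X → Fin d → ℝ // Measurable g})
  set L := ∫⁻ z, ENNReal.ofReal (abstainLoss (2 ^ d) (1/2) z.2 (h.1 z.1)) ∂D with hL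
  have main : k * A + (∫⁻ z, ENNReal.ofReal (psiBEP d B z.2 (g z.1)) ∂D) ≤ C + k * L := by
    have hm1 : Measurable fun z : X × Fin (2 ^ d) =>
        ENNReal.ofReal (abstainLoss (2 ^ d) (1/2) z.2 (predBEP d B τ (f z.1))) :=
      meas_lossInt _ (meas_pred.comp hf)
    have hm2 : Measurable fun z : X × Fin (2 ^ d) =>
        ENNReal.ofReal (psiBEP d B z.2 (f z.1)) := meas_psiInt f hf
    rw [hA, hL, hC, ← lintegral_const_mul' k _ hktop, ← lintegral_const_mul' k _ hktop,
      ← lintegral_add_left (hm1.const_mul k),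
      ← lintegral_add_left hm2]
    apply lintegral_mono
    intro z
    have hptwise := key (B := B) hd hτ0 hτ1 (f z.1) (h.1 z.1) z.2
    have h2m : (0:ℝ) ≤ 2 * m := by linarith
    calc k * ENNReal.ofReal (abstainLoss (2 ^ d) (1/2) z.2 (predBEP d B τ (f z.1)))
          + ENNReal.ofReal (psiBEP d B z.2 (g z.1))
        = ENNReal.ofReal (2 * m * abstainLoss (2 ^ d) (1/2) z.2 (predBEP d B τ (f z.1))
            + psiBEP d B z.2 (g z.1)) := by
          rw [ENNReal.ofReal_add (mul_nonneg h2m (loss_nonneg _ _ _)) (psi_nonneg _ _),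
            ENNReal.ofReal_mul h2m, hk]
      _ ≤ ENNReal.ofReal (psiBEP d B z.2 (f z.1)
            + 2 * m * abstainLoss (2 ^ d) (1/2) z.2 (h.1 z.1)) :=
          ENNReal.ofReal_le_ofReal hptwise
      _ = ENNReal.ofReal (psiBEP d B z.2 (f z.1))
            + k * ENNReal.ofReal (abstainLoss (2 ^ d) (1/2) z.2 (h.1 z.1)) := by
          rw [ENNReal.ofReal_add (psi_nonneg _ _) (mul_nonneg h2m (loss_nonneg _ _ _)),
            ENNReal.ofReal_mul h2m, hk]
  have hfinal : k * A + E ≤ ((C - E) + k * L) + E := by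
    refine le_trans (add_le_add_right hEg _) ?_
    rw [add_right_comm, tsub_add_cancel_of_le hEC]
    exact main
  have hfinal2 : k * A ≤ (C - E) + k * L := (ENNReal.add_le_add_iff_right hEtop).1 hfinal
  calc A * k = k * A := mul_comm _ _
    _ ≤ (C - E) + k * L := hfinal2
    _ = (C - E) + L * k := by rw [mul_comm k L]
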